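/- Let G be a metrizable topological group with identity e, and let b ∈ G be such that the sequence (b^n)_{n≥1} has a cluster point c ∈ G. Then there exists an increasing sequence of natural numbers (n_k) with n_{k+1} − n_k → ∞ such that b^{n_k} → c, and consequently b^{n_{k+1}−n_k} → e; in particular e is a cluster point of (b^n)_{n≥1}. -/

import Mathlib

open Filter

private lemma strictMono_gap {f : ℕ → ℕ} (hf : StrictMono f) (a d : ℕ) :
    f a + d ≤ f (a + d) := by
  induction d with
  | zero => simp
  | succ d ih =>
    have h1 := hf (Nat.lt_succ_self (a + d))
    have h2 : a + (d + 1) = (a + d) + 1 := by ring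
    rw [Nat.succ_eq_add_one] at h1
    rw [h2]
    omega

/-- In a metrizable topological group `G`, if `c` is a cluster point of `(b ^ n)_{n ≥ 1}`,
then there is an increasing sequence `(n_k)` with `n_{k+1} - n_k → ∞`, `b ^ n_k → c` and
`b ^ (n_{k+1} - n_k) → 1`; in particular `1` is a cluster point of `(b ^ n)_{n ≥ 1}`. -/
theorem cluster_point_powers_group {G : Type*} [Group G] [TopologicalSpace G]
    [IsTopologicalGroup G] [TopologicalSpace.MetrizableSpace G]
    (b c : G) (hc : MapClusterPt c atTop (fun n : ℕ => b ^ (n + 1))) :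
    (∃ n : ℕ → ℕ, StrictMono n ∧ (∀ k, 1 ≤ n k) ∧
      Tendsto (fun k => (n (k + 1) - n k : ℕ)) atTop atTop ∧
      Tendsto (fun k => b ^ (n k)) atTop (nhds c) ∧
      Tendsto (fun k => b ^ (n (k + 1) - n k)) atTop (nhds (1 : G))) ∧
    MapClusterPt (1 : G) atTop (fun n : ℕ => b ^ (n + 1)) := by
  obtain ⟨ψ, hψ, hψc⟩ := TopologicalSpace.FirstCountableTopology.tendsto_subseq hc
  set n : ℕ → ℕ := fun k => ψ (k ^ 2) + 1 with hn
  have hsq : StrictMono fun k : ℕ => k ^ 2 := fun a b h => Nat.pow_lt_pow_left h two_ne_zero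
  have hmono : StrictMono n := fun a b h => by
    simpa [hn] using hψ (hsq h)
  have hgap : ∀ k, 2 * k + 1 ≤ n (k + 1) - n k := by
    intro k
    have h1 : k ^ 2 + (2 * k + 1) = (k + 1) ^ 2 := by ring
    have := strictMono_gap hψ (k ^ 2) (2 * k + 1)
    rw [h1] at this
    simp only [hn]
    omega
  have hgapT : Tendsto (fun k => (n (k + 1) - n k : ℕ)) atTop atTop :=
    tendsto_atTop_mono (fun k => by have := hgap k; simp only [id]; omega) tendsto_id
  have hnk : Tendsto (fun k => b ^ (n k)) atTop (nhds c) := by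
    have : Tendsto (fun k : ℕ => k ^ 2) atTop atTop := hsq.tendsto_atTop
    exact hψc.comp this
  have hle : ∀ k, n k ≤ n (k + 1) := fun k => (hmono (Nat.lt_succ_self k)).le
  have hpow : ∀ k, b ^ (n (k + 1) - n k) = b ^ (n (k + 1)) * (b ^ (n k))⁻¹ := by
    intro k
    rw [eq_mul_inv_iff_mul_eq, ← pow_add]
    congr 1
    have := hle k
    omega
  have hgap1 : Tendsto (fun k => b ^ (n (k + 1) - n k)) atTop (nhds (1 : G)) := by
    have h1 : Tendsto (fun k => b ^ (n (k + 1))) atTop (nhds c) :=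
      hnk.comp (tendsto_add_atTop_nat 1)
    have := h1.mul hnk.inv
    rw [mul_inv_cancel] at this
    exact this.congr fun k => (hpow k).symm
  refine ⟨⟨n, hmono, fun k => by simp [hn], hgapT, hnk, hgap1⟩, ?_⟩
  have hT : Tendsto (fun k => n (k + 1) - n k - 1) atTop atTop :=
    tendsto_atTop_mono (fun k => by have := hgap k; simp only [id]; omega) tendsto_id
  refine MapClusterPt.of_comp hT (Tendsto.mapClusterPt (hgap1.congr fun k => ?_))
  have hk := hgap k
  have : n (k + 1) - n k - 1 + 1 = n (k + 1) - n k := by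
    have := hmono (Nat.lt_succ_self k); omega
  simp [Function.comp, Nat.succ_eq_add_one, this]
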